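/- Let f : [0,1] → [0,1] be continuous with zero topological entropy, and let x ∈ [0,1] with ω_f(x) infinite. If J is a closed subinterval of [0,1] containing three distinct points of ω_f(x), then J contains a periodic point of f. -/

import Mathlib

open Filter Topology

/-- The unit interval `[0,1]` as a subtype of `ℝ`. -/
abbrev UI := Set.Icc (0 : ℝ) 1

/-- The ω-limit set of a point `x` under `f`: the set of limit points of the orbit. -/
def omegaSet (f : UI → UI) (x : UI) : Set UI :=
  {y | ∃ φ : ℕ → ℕ, StrictMono φ ∧ Tendsto (fun n => f^[φ n] x) atTop (𝓝 y)}

/-- `p` is a periodic point of `f`. -/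
def IsPerPt (f : UI → UI) (p : UI) : Prop := ∃ n ≥ 1, f^[n] p = p

lemma freq_visit (f : UI → UI) (x q : UI) (hq : q ∈ omegaSet f x)
    (ε : ℝ) (hε : 0 < ε) (N : ℕ) :
    ∃ n, N ≤ n ∧ |((f^[n] x : UI) : ℝ) - (q : ℝ)| < ε := by
  obtain ⟨φ, hφ, ht⟩ := hq
  rw [Metric.tendsto_atTop] at ht
  obtain ⟨M, hM⟩ := ht ε hε
  refine ⟨φ (max M N), le_trans (le_max_right M N) hφ.le_apply, ?_⟩
  have h := hM (max M N) (le_max_left M N)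
  rwa [Subtype.dist_eq, Real.dist_eq] at h

lemma omega_map (f : UI → UI) (hf : Continuous f) (x q : UI)
    (hq : q ∈ omegaSet f x) (k : ℕ) : f^[k] q ∈ omegaSet f x := by
  obtain ⟨φ, hφ, ht⟩ := hq
  refine ⟨fun n => φ n + k, fun m n h => by
    simp only []; have := hφ h; omega, ?_⟩
  have h2 : Tendsto (fun n => f^[k] (f^[φ n] x)) atTop (𝓝 (f^[k] q)) :=
    ((hf.iterate k).tendsto q).comp ht
  refine h2.congr fun n => ?_
  rw [← Function.iterate_add_apply, Nat.add_comm]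

lemma dich (f : UI → UI) (hf : Continuous f) (a b : UI)
    (hno : ∀ z : UI, a ≤ z → z ≤ b → ∀ n, 1 ≤ n → f^[n] z ≠ z)
    (n : ℕ) (hn : 1 ≤ n) :
    (∀ z : UI, a ≤ z → z ≤ b → f^[n] z < z) ∨ (∀ z : UI, a ≤ z → z ≤ b → z < f^[n] z) := by
  by_contra hcon
  push_neg at hcon
  obtain ⟨⟨z₁, hz₁a, hz₁b, hz₁⟩, ⟨z₂, hz₂a, hz₂b, hz₂⟩⟩ := hcon
  -- D z = (f^[n] z : ℝ) - z ; D z₁ > 0, D z₂ < 0 (strictness from hno)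
  have hne : ∀ z : UI, a ≤ z → z ≤ b → ((f^[n] z : ℝ) - z) ≠ 0 := by
    intro z hza hzb h0
    exact hno z hza hzb n hn (Subtype.ext (by linarith))
  have hD1 : (0:ℝ) < (f^[n] z₁ : ℝ) - (z₁:ℝ) := by
    rcases lt_or_eq_of_le (Subtype.coe_le_coe.mpr hz₁) with h | h
    · linarith
    · exact absurd (by linarith : ((f^[n] z₁ : ℝ) - (z₁:ℝ)) = 0) (hne z₁ hz₁a hz₁b)
  have hD2 : (f^[n] z₂ : ℝ) - (z₂:ℝ) < 0 := by
    rcases lt_or_eq_of_le (Subtype.coe_le_coe.mpr hz₂) with h | h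
    · linarith
    · exact absurd (by linarith : ((f^[n] z₂ : ℝ) - (z₂:ℝ)) = 0) (hne z₂ hz₂a hz₂b)
  -- real-valued function via projIcc
  set π : ℝ → UI := Set.projIcc (0:ℝ) 1 zero_le_one with hπ
  set D : ℝ → ℝ := fun s => ((f^[n] (π s) : UI) : ℝ) - ((π s : UI) : ℝ) with hD
  have hDc : Continuous D := by
    have h1 : Continuous fun s : ℝ => ((f^[n] (π s) : UI) : ℝ) :=
      continuous_subtype_val.comp ((hf.iterate n).comp continuous_projIcc)
    have h2 : Continuous fun s : ℝ => ((π s : UI) : ℝ) :=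
      continuous_subtype_val.comp continuous_projIcc
    exact h1.sub h2
  have hπval : ∀ z : UI, π (z : ℝ) = z := by
    intro z
    rw [hπ, Set.projIcc_of_mem _ z.2]
  have hDval : ∀ z : UI, D (z : ℝ) = (f^[n] z : ℝ) - (z : ℝ) := by
    intro z; rw [hD]; simp only [hπval]
  -- find a zero between z₁ and z₂
  have hz0 : ∃ s₀ : ℝ, s₀ ∈ Set.Icc (min (z₁:ℝ) (z₂:ℝ)) (max (z₁:ℝ) (z₂:ℝ)) ∧ D s₀ = 0 := by
    rcases le_total (z₁:ℝ) (z₂:ℝ) with h | h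
    · have hsub : Set.Icc (D (z₂:ℝ)) (D (z₁:ℝ)) ⊆ D '' Set.Icc (z₁:ℝ) (z₂:ℝ) :=
        intermediate_value_Icc' h hDc.continuousOn
      have : (0:ℝ) ∈ Set.Icc (D (z₂:ℝ)) (D (z₁:ℝ)) := by
        rw [hDval, hDval]; constructor <;> linarith
      obtain ⟨s₀, hs₀mem, hs₀⟩ := hsub this
      exact ⟨s₀, by rw [min_eq_left h, max_eq_right h]; exact hs₀mem, hs₀⟩
    · have hsub : Set.Icc (D (z₂:ℝ)) (D (z₁:ℝ)) ⊆ D '' Set.Icc (z₂:ℝ) (z₁:ℝ) :=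
        intermediate_value_Icc h hDc.continuousOn
      have : (0:ℝ) ∈ Set.Icc (D (z₂:ℝ)) (D (z₁:ℝ)) := by
        rw [hDval, hDval]; constructor <;> linarith
      obtain ⟨s₀, hs₀mem, hs₀⟩ := hsub this
      exact ⟨s₀, by rw [min_eq_right h, max_eq_left h]; exact hs₀mem, hs₀⟩
  obtain ⟨s₀, hs₀mem, hs₀⟩ := hz0
  have hamin : (a:ℝ) ≤ min (z₁:ℝ) (z₂:ℝ) := le_min (Subtype.coe_le_coe.mpr hz₁a) (Subtype.coe_le_coe.mpr hz₂a)
  have hbmax : max (z₁:ℝ) (z₂:ℝ) ≤ (b:ℝ) := max_le (Subtype.coe_le_coe.mpr hz₁b) (Subtype.coe_le_coe.mpr hz₂b)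
  have hs01 : s₀ ∈ Set.Icc (0:ℝ) 1 :=
    ⟨le_trans a.2.1 (le_trans hamin hs₀mem.1), le_trans (le_trans hs₀mem.2 hbmax) b.2.2⟩
  set z₀ : UI := ⟨s₀, hs01⟩ with hz₀
  have hπz₀ : π s₀ = z₀ := by rw [hπ, Set.projIcc_of_mem _ hs01]
  have hz₀a : a ≤ z₀ := Subtype.coe_le_coe.mp (le_trans hamin hs₀mem.1)
  have hz₀b : z₀ ≤ b := Subtype.coe_le_coe.mp (le_trans hs₀mem.2 hbmax)
  have hs₀' : ((f^[n] (π s₀) : UI) : ℝ) - ((π s₀ : UI) : ℝ) = 0 := hs₀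
  rw [hπz₀] at hs₀'
  exact hne z₀ hz₀a hz₀b hs₀'

lemma clash (f : UI → UI) (hf : Continuous f) (a b : UI)
    (hno : ∀ z : UI, a ≤ z → z ≤ b → ∀ n, 1 ≤ n → f^[n] z ≠ z)
    (z w : UI) (d e : ℕ) (hd : 1 ≤ d) (he : 1 ≤ e)
    (hza : a ≤ z) (hzb : z ≤ b) (hzda : a ≤ f^[d] z) (hzdb : f^[d] z ≤ b)
    (hzlt : z < f^[d] z)
    (hwa : a ≤ w) (hwb : w ≤ b) (hwea : a ≤ f^[e] w) (hweb : f^[e] w ≤ b)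
    (hwlt : f^[e] w < w) : False := by
  have pos : ∀ k, 1 ≤ k → ∀ z' : UI, a ≤ z' → z' ≤ b → z' < f^[k * d] z' := by
    intro k hk
    induction k with
    | zero => omega
    | succ k ih =>
      rcases Nat.eq_or_lt_of_le hk with h1 | h1
      · -- k + 1 = 1
        have hk0 : k = 0 := by omega
        subst hk0
        rcases dich f hf a b hno d hd with hneg | hpos
        · exact absurd (hneg z hza hzb) (not_lt.mpr hzlt.le)
        · intro z' h1 h2; simpa using hpos z' h1 h2
      · have hk1 : 1 ≤ k := by omega
        have ihk := ih hk1
        rcases dich f hf a b hno ((k+1) * d) (Nat.mul_pos (Nat.succ_pos k) hd) with hneg | hpos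
        · exfalso
          have h2 : f^[(k+1) * d] z = f^[k * d] (f^[d] z) := by
            rw [← Function.iterate_add_apply]
            congr 1
            ring
          have h3 := ihk (f^[d] z) hzda hzdb
          have h4 := hneg z hza hzb
          rw [h2] at h4
          exact absurd (hzlt.trans h3) (not_lt.mpr h4.le)
        · exact hpos
  have neg : ∀ k, 1 ≤ k → ∀ w' : UI, a ≤ w' → w' ≤ b → f^[k * e] w' < w' := by
    intro k hk
    induction k with
    | zero => omega
    | succ k ih =>
      rcases Nat.eq_or_lt_of_le hk with h1 | h1
      · have hk0 : k = 0 := by omega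
        subst hk0
        rcases dich f hf a b hno e he with hneg | hpos
        · intro w' h1 h2; simpa using hneg w' h1 h2
        · exact absurd (hpos w hwa hwb) (not_lt.mpr hwlt.le)
      · have hk1 : 1 ≤ k := by omega
        have ihk := ih hk1
        rcases dich f hf a b hno ((k+1) * e) (Nat.mul_pos (Nat.succ_pos k) he) with hneg | hpos
        · exact hneg
        · exfalso
          have h2 : f^[(k+1) * e] w = f^[k * e] (f^[e] w) := by
            rw [← Function.iterate_add_apply]
            congr 1
            ring
          have h3 := ihk (f^[e] w) hwea hweb
          have h4 := hpos w hwa hwb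
          rw [h2] at h4
          exact absurd (h3.trans hwlt) (not_lt.mpr h4.le)
  have h1 := pos e he z hza hzb
  have h2 := neg d hd z hza hzb
  rw [Nat.mul_comm] at h1
  exact absurd (h1.trans h2) (lt_irrefl z)

lemma main_dec (f : UI → UI) (hf : Continuous f) (x p r a b : UI)
    (hap : a < p) (hpr : p < r) (hrb : r ≤ b)
    (hp : p ∈ omegaSet f x) (hr : r ∈ omegaSet f x)
    (hno : ∀ z : UI, a ≤ z → z ≤ b → ∀ n, 1 ≤ n → f^[n] z ≠ z)
    (hdec : ∀ m n : ℕ, m < n → a ≤ f^[m] x → f^[m] x ≤ b → a ≤ f^[n] x → f^[n] x ≤ b →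
      f^[n] x < f^[m] x) : False := by
  have hpb : p < b := hpr.trans_le hrb
  have hab : a ≤ b := (hap.trans hpb).le
  have hPA : (a:ℝ) < (p:ℝ) := Subtype.coe_lt_coe.mpr hap
  have hPB : (p:ℝ) < (b:ℝ) := Subtype.coe_lt_coe.mpr hpb
  -- visits near p, inside the open interval (a,b)
  have visitP : ∀ δ : ℝ, 0 < δ → ∀ N : ℕ, ∃ n, N ≤ n ∧ a < f^[n] x ∧ f^[n] x < b ∧
      |((f^[n] x : UI) : ℝ) - (p:ℝ)| < δ := by
    intro δ hδ N
    have h1 : (0:ℝ) < (p:ℝ) - a := by linarith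
    have h2 : (0:ℝ) < (b:ℝ) - p := by linarith
    obtain ⟨n, hn, hdist⟩ := freq_visit f x p hp (min δ (min ((p:ℝ) - a) ((b:ℝ) - p)))
      (lt_min hδ (lt_min h1 h2)) N
    obtain ⟨hl, hr'⟩ := abs_lt.mp hdist
    have hmin1 : min δ (min ((p:ℝ) - a) ((b:ℝ) - p)) ≤ (p:ℝ) - a :=
      le_trans (min_le_right _ _) (min_le_left _ _)
    have hmin2 : min δ (min ((p:ℝ) - a) ((b:ℝ) - p)) ≤ (b:ℝ) - p :=
      le_trans (min_le_right _ _) (min_le_right _ _)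
    refine ⟨n, hn, ?_, ?_, ?_⟩
    · exact Subtype.coe_lt_coe.mp (by linarith)
    · exact Subtype.coe_lt_coe.mp (by linarith)
    · exact lt_of_lt_of_le hdist (min_le_left _ _)
  -- F1 : every visit in J has value above p
  have hF1 : ∀ n : ℕ, a ≤ f^[n] x → f^[n] x ≤ b → p < f^[n] x := by
    intro n hna hnb
    by_contra hle
    push_neg at hle
    obtain ⟨m₁, hm₁N, hm₁a, hm₁b, _⟩ := visitP 1 one_pos (n+1)
    have hm₁lt : f^[m₁] x < f^[n] x := hdec n m₁ (by omega) hna hnb hm₁a.le hm₁b.le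
    have hd2 : (0:ℝ) < (p:ℝ) - (f^[m₁] x : ℝ) := by
      have : ((f^[m₁] x : UI):ℝ) < (f^[n] x : ℝ) := Subtype.coe_lt_coe.mpr hm₁lt
      have : ((f^[n] x : UI):ℝ) ≤ (p:ℝ) := Subtype.coe_le_coe.mpr hle
      linarith [Subtype.coe_lt_coe.mpr hm₁lt]
    obtain ⟨m₂, hm₂N, hm₂a, hm₂b, hm₂d⟩ := visitP ((p:ℝ) - (f^[m₁] x : ℝ)) hd2 (m₁+1)
    have hm₂lt : f^[m₂] x < f^[m₁] x := hdec m₁ m₂ (by omega) hm₁a.le hm₁b.le hm₂a.le hm₂b.le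
    have h1 := (abs_lt.mp hm₂d).1
    have h2 : ((f^[m₂] x : UI):ℝ) < (f^[m₁] x : ℝ) := Subtype.coe_lt_coe.mpr hm₂lt
    linarith
  -- F3 : ω-limit points above p are ≥ b
  have hF3 : ∀ w : UI, w ∈ omegaSet f x → p < w → b ≤ w := by
    intro w hw hpw
    by_contra hwb
    push_neg at hwb
    have hWP : (p:ℝ) < (w:ℝ) := Subtype.coe_lt_coe.mpr hpw
    have hWB : (w:ℝ) < (b:ℝ) := Subtype.coe_lt_coe.mpr hwb
    set gap : ℝ := ((w:ℝ) - p) / 2 with hgap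
    have hgap0 : 0 < gap := by rw [hgap]; linarith
    obtain ⟨n₁, _, hn₁a, hn₁b, hn₁d⟩ := visitP gap hgap0 0
    have hε2 : (0:ℝ) < min gap ((b:ℝ) - w) := lt_min hgap0 (by linarith)
    obtain ⟨n₂, hn₂N, hn₂d⟩ := freq_visit f x w hw _ hε2 (n₁ + 1)
    obtain ⟨hl, hr'⟩ := abs_lt.mp hn₂d
    have hmin1 : min gap ((b:ℝ) - w) ≤ gap := min_le_left _ _
    have hmin2 : min gap ((b:ℝ) - w) ≤ (b:ℝ) - w := min_le_right _ _
    have hn₂a : a ≤ f^[n₂] x := Subtype.coe_le_coe.mp (by rw [hgap] at *; linarith)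
    have hn₂b : f^[n₂] x ≤ b := Subtype.coe_le_coe.mp (by linarith)
    have hlt := hdec n₁ n₂ (by omega) hn₁a.le hn₁b.le hn₂a hn₂b
    have hlt' : ((f^[n₂] x : UI):ℝ) < ((f^[n₁] x : UI):ℝ) := Subtype.coe_lt_coe.mpr hlt
    have h1 := (abs_lt.mp hn₁d).2
    rw [hgap] at *
    linarith
  -- r = b, so b is an ω-limit point
  have hb : b ∈ omegaSet f x := by
    rcases eq_or_lt_of_le hrb with h | h
    · rwa [h] at hr
    · exact absurd (hF3 r hr hpr) (not_le.mpr h)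
  -- pick two visits near p
  obtain ⟨τ₁, _, hτ₁a, hτ₁b, hτ₁d⟩ := visitP 1 one_pos 0
  obtain ⟨τ₂, hτ₂N, hτ₂a, hτ₂b, hτ₂d⟩ := visitP 1 one_pos (τ₁ + 1)
  set U₁ : UI := f^[τ₁] x with hU₁
  set U₂ : UI := f^[τ₂] x with hU₂
  have hτlt : τ₁ < τ₂ := by omega
  have hU21 : U₂ < U₁ := hdec τ₁ τ₂ hτlt hτ₁a.le hτ₁b.le hτ₂a.le hτ₂b.le
  set G : ℕ := τ₂ - τ₁ with hGdef
  have hG1 : 1 ≤ G := by omega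
  have hGadd : G + τ₁ = τ₂ := by omega
  have hfGU₁ : f^[G] U₁ = U₂ := by
    rw [hU₁, hU₂, ← Function.iterate_add_apply, hGadd]
  -- σ(G) = "-"
  have hσG : ∀ z : UI, a ≤ z → z ≤ b → f^[G] z < z := by
    rcases dich f hf a b hno G hG1 with hneg | hpos
    · exact hneg
    · exact absurd (hfGU₁ ▸ hpos U₁ hτ₁a.le hτ₁b.le) (not_lt.mpr hU21.le)
  -- f^[G] p ≤ a
  have hfgp_mem : f^[G] p ∈ omegaSet f x := omega_map f hf x p hp G
  have hfgp_lt : f^[G] p < p := hσG p hap.le hpb.le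
  have hfgp_le_a : ((f^[G] p : UI) : ℝ) ≤ (a:ℝ) := by
    by_contra hcon
    push_neg at hcon
    set w : UI := f^[G] p with hw
    have hWA : (a:ℝ) < (w:ℝ) := hcon
    have hWP : (w:ℝ) < (p:ℝ) := Subtype.coe_lt_coe.mpr hfgp_lt
    have hε : (0:ℝ) < min ((p:ℝ) - w) ((w:ℝ) - a) := lt_min (by linarith) (by linarith)
    obtain ⟨n, _, hnd⟩ := freq_visit f x w hfgp_mem _ hε 0
    obtain ⟨hl, hr'⟩ := abs_lt.mp hnd
    have hmin1 : min ((p:ℝ) - w) ((w:ℝ) - a) ≤ (p:ℝ) - w := min_le_left _ _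
    have hmin2 : min ((p:ℝ) - w) ((w:ℝ) - a) ≤ (w:ℝ) - a := min_le_right _ _
    have hna : a ≤ f^[n] x := Subtype.coe_le_coe.mp (by linarith)
    have hnb : f^[n] x ≤ b := Subtype.coe_le_coe.mp (by linarith)
    have := Subtype.coe_lt_coe.mpr (hF1 n hna hnb)
    linarith
  -- IVT : find z₁ ∈ [p, U₁] with f^[G] z₁ = p
  have hpU₁ : (p:ℝ) < (U₁:ℝ) := Subtype.coe_lt_coe.mpr (hF1 τ₁ hτ₁a.le hτ₁b.le)
  have hpU₂ : (p:ℝ) < (U₂:ℝ) := Subtype.coe_lt_coe.mpr (hF1 τ₂ hτ₂a.le hτ₂b.le)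
  set π : ℝ → UI := Set.projIcc (0:ℝ) 1 zero_le_one with hπ
  set H : ℝ → ℝ := fun s => ((f^[G] (π s) : UI) : ℝ) with hH
  have hHc : Continuous H :=
    continuous_subtype_val.comp ((hf.iterate G).comp continuous_projIcc)
  have hπval : ∀ z : UI, π (z : ℝ) = z := fun z => Set.projIcc_of_mem _ z.2
  have hHval : ∀ z : UI, H (z : ℝ) = ((f^[G] z : UI) : ℝ) := by
    intro z; rw [hH]; simp only [hπval]
  obtain ⟨z₁, hpz₁, hz₁U₁, hfGz₁⟩ :
      ∃ z₁ : UI, p ≤ z₁ ∧ z₁ ≤ U₁ ∧ f^[G] z₁ = p := by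
    have hsub : Set.Icc (H (p:ℝ)) (H (U₁:ℝ)) ⊆ H '' Set.Icc (p:ℝ) (U₁:ℝ) :=
      intermediate_value_Icc hpU₁.le hHc.continuousOn
    have hmem : (p:ℝ) ∈ Set.Icc (H (p:ℝ)) (H (U₁:ℝ)) := by
      rw [hHval, hHval, hfGU₁]
      exact ⟨by linarith, hpU₂.le⟩
    obtain ⟨s₀, hs₀mem, hs₀⟩ := hsub hmem
    have hs01 : s₀ ∈ Set.Icc (0:ℝ) 1 :=
      ⟨le_trans p.2.1 hs₀mem.1, le_trans hs₀mem.2 U₁.2.2⟩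
    refine ⟨⟨s₀, hs01⟩, Subtype.coe_le_coe.mp hs₀mem.1, Subtype.coe_le_coe.mp hs₀mem.2, ?_⟩
    have hπs₀ : π s₀ = ⟨s₀, hs01⟩ := Set.projIcc_of_mem _ hs01
    have : H s₀ = ((f^[G] (⟨s₀, hs01⟩ : UI) : UI) : ℝ) := by rw [hH]; simp only [hπs₀]
    rw [hs₀] at this
    exact Subtype.ext this.symm
  have hz₁a : a ≤ z₁ := hap.le.trans hpz₁
  have hz₁b : z₁ ≤ b := hz₁U₁.trans hτ₁b.le
  -- continuity of f^[G] at b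
  have hfgb_lt : f^[G] b < b := hσG b hab le_rfl
  have hfgb_mem : f^[G] b ∈ omegaSet f x := omega_map f hf x b hb G
  have hfgb_le_p : f^[G] b ≤ p := by
    by_contra hcon
    push_neg at hcon
    exact absurd (hF3 (f^[G] b) hfgb_mem hcon) (not_le.mpr hfgb_lt)
  -- continuity of f^[G] at b : get δ₀
  have hcontG : ContinuousAt (fun z : UI => ((f^[G] z : UI) : ℝ)) b :=
    (continuous_subtype_val.comp (hf.iterate G)).continuousAt
  have hε0 : (0:ℝ) < (U₂:ℝ) - ((f^[G] b : UI) : ℝ) := by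
    have : ((f^[G] b : UI) : ℝ) ≤ (p:ℝ) := Subtype.coe_le_coe.mpr hfgb_le_p
    linarith
  obtain ⟨δ₀, hδ₀pos, hδ₀⟩ := Metric.continuousAt_iff.mp hcontG _ hε0
  -- pick a visit near b, later than τ₂
  have hBU₂ : (0:ℝ) < (b:ℝ) - (U₂:ℝ) := by
    have := Subtype.coe_lt_coe.mpr hτ₂b
    linarith
  obtain ⟨γ, hγN, hγd⟩ := freq_visit f x b hb (min δ₀ ((b:ℝ) - (U₂:ℝ)))
    (lt_min hδ₀pos hBU₂) (τ₂ + 1)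
  set Wγ : UI := f^[γ] x with hWγ
  set n₀ : ℕ := γ - τ₂ with hn₀def
  have hn₀1 : 1 ≤ n₀ := by omega
  have hn₀add : n₀ + τ₂ = γ := by omega
  have hfn₀U₂ : f^[n₀] U₂ = Wγ := by
    rw [hU₂, hWγ, ← Function.iterate_add_apply, hn₀add]
  obtain ⟨hγl, hγr⟩ := abs_lt.mp hγd
  have hγmin1 : min δ₀ ((b:ℝ) - (U₂:ℝ)) ≤ δ₀ := min_le_left _ _
  have hγmin2 : min δ₀ ((b:ℝ) - (U₂:ℝ)) ≤ (b:ℝ) - (U₂:ℝ) := min_le_right _ _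
  have hWγU₂ : (U₂:ℝ) < (Wγ:ℝ) := by linarith
  -- σ(n₀) = "+"
  have hσn₀ : ∀ z : UI, a ≤ z → z ≤ b → z < f^[n₀] z := by
    rcases dich f hf a b hno n₀ hn₀1 with hneg | hpos
    · exfalso
      have := Subtype.coe_lt_coe.mpr (hfn₀U₂ ▸ hneg U₂ hτ₂a.le hτ₂b.le)
      linarith
    · exact hpos
  -- σ(n₀ + G) = "+"
  have hσn₀G : ∀ z : UI, a ≤ z → z ≤ b → z < f^[n₀ + G] z := by
    rcases dich f hf a b hno (n₀ + G) (by omega) with hneg | hpos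
    · exfalso
      have heval : f^[n₀ + G] z₁ = f^[n₀] p := by
        rw [Function.iterate_add_apply, hfGz₁]
      have hfn₀p_mem : f^[n₀] p ∈ omegaSet f x := omega_map f hf x p hp n₀
      have hfn₀p_gt : p < f^[n₀] p := hσn₀ p hap.le hpb.le
      have hfn₀p_ge_b : b ≤ f^[n₀] p := hF3 _ hfn₀p_mem hfn₀p_gt
      have h1 := hneg z₁ hz₁a hz₁b
      rw [heval] at h1
      have h2 : z₁ < b := lt_of_le_of_lt hz₁U₁ hτ₁b
      exact absurd (h2.trans_le hfn₀p_ge_b) (not_lt.mpr h1.le)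
    · exact hpos
  -- final contradiction at U₂
  have hfinal : f^[n₀ + G] U₂ = f^[G] Wγ := by
    rw [Nat.add_comm, Function.iterate_add_apply, hfn₀U₂]
  have h1 := Subtype.coe_lt_coe.mpr (hσn₀G U₂ hτ₂a.le hτ₂b.le)
  rw [hfinal] at h1
  have h2 : dist Wγ b < δ₀ := by
    rw [Subtype.dist_eq, Real.dist_eq]
    exact lt_of_lt_of_le hγd hγmin1
  have h3 := hδ₀ h2
  rw [Real.dist_eq] at h3
  have h4 := (abs_lt.mp h3).2
  have h5 : ((f^[G] b : UI) : ℝ) ≤ (p:ℝ) := Subtype.coe_le_coe.mpr hfgb_le_p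
  linarith

def flip01 : UI → UI := fun z => ⟨1 - z.val, ⟨by linarith [z.2.2], by linarith [z.2.1]⟩⟩

lemma flip01_coe (z : UI) : ((flip01 z : UI) : ℝ) = 1 - (z : ℝ) := rfl

lemma flip01_flip01 (z : UI) : flip01 (flip01 z) = z := Subtype.ext (by
  rw [flip01_coe, flip01_coe]; ring)

lemma flip01_continuous : Continuous flip01 :=
  Continuous.subtype_mk (continuous_const.sub continuous_subtype_val) _

lemma flip01_le_flip01 {u v : UI} : flip01 u ≤ flip01 v ↔ v ≤ u := by
  rw [← Subtype.coe_le_coe, ← Subtype.coe_le_coe, flip01_coe, flip01_coe]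
  constructor <;> intro h <;> linarith

lemma flip01_lt_flip01 {u v : UI} : flip01 u < flip01 v ↔ v < u := by
  rw [← Subtype.coe_lt_coe, ← Subtype.coe_lt_coe, flip01_coe, flip01_coe]
  constructor <;> intro h <;> linarith

lemma flip01_iter (f : UI → UI) (n : ℕ) (z : UI) :
    (flip01 ∘ f ∘ flip01)^[n] z = flip01 (f^[n] (flip01 z)) := by
  induction n with
  | zero => simp [flip01_flip01]
  | succ n ih =>
    rw [Function.iterate_succ_apply', ih, Function.iterate_succ_apply']
    simp only [Function.comp_apply, flip01_flip01]

lemma flip01_omega (f : UI → UI) (x q : UI) (hq : q ∈ omegaSet f x) :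
    flip01 q ∈ omegaSet (flip01 ∘ f ∘ flip01) (flip01 x) := by
  obtain ⟨φ, hφ, ht⟩ := hq
  refine ⟨φ, hφ, ?_⟩
  have h2 : Tendsto (fun n => flip01 (f^[φ n] x)) atTop (𝓝 (flip01 q)) :=
    (flip01_continuous.tendsto q).comp ht
  refine h2.congr fun n => ?_
  rw [flip01_iter, flip01_flip01]

lemma core (f : UI → UI) (hf : Continuous f) (x a b q₁ q₂ q₃ : UI)
    (hq₁m : q₁ ∈ Set.Icc a b) (hq₁ω : q₁ ∈ omegaSet f x)
    (hq₂m : q₂ ∈ Set.Icc a b) (hq₂ω : q₂ ∈ omegaSet f x)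
    (hq₃m : q₃ ∈ Set.Icc a b) (hq₃ω : q₃ ∈ omegaSet f x)
    (h12 : q₁ < q₂) (h23 : q₂ < q₃)
    (hno : ∀ z : UI, a ≤ z → z ≤ b → ∀ n, 1 ≤ n → f^[n] z ≠ z) : False := by
  have haq₂ : a < q₂ := lt_of_le_of_lt hq₁m.1 h12
  have hq₂b : q₂ < b := lt_of_lt_of_le h23 hq₃m.2
  by_cases hDec : ∀ m n : ℕ, m < n → a ≤ f^[m] x → f^[m] x ≤ b → a ≤ f^[n] x →
      f^[n] x ≤ b → f^[n] x < f^[m] x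
  · exact main_dec f hf x q₂ q₃ a b haq₂ h23 hq₃m.2 hq₂ω hq₃ω hno hDec
  by_cases hInc : ∀ m n : ℕ, m < n → a ≤ f^[m] x → f^[m] x ≤ b → a ≤ f^[n] x →
      f^[n] x ≤ b → f^[m] x < f^[n] x
  · -- apply main_dec to the flipped system
    set g : UI → UI := flip01 ∘ f ∘ flip01 with hg
    have hgc : Continuous g := flip01_continuous.comp (hf.comp flip01_continuous)
    have hgiter : ∀ (n : ℕ) (z : UI), g^[n] z = flip01 (f^[n] (flip01 z)) :=
      fun n z => flip01_iter f n z
    have hgx : ∀ n : ℕ, g^[n] (flip01 x) = flip01 (f^[n] x) := by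
      intro n; rw [hgiter, flip01_flip01]
    refine main_dec g hgc (flip01 x) (flip01 q₂) (flip01 q₁) (flip01 b) (flip01 a)
      (flip01_lt_flip01.mpr hq₂b) (flip01_lt_flip01.mpr h12)
      (flip01_le_flip01.mpr hq₁m.1)
      (flip01_omega f x q₂ hq₂ω) (flip01_omega f x q₁ hq₁ω) ?_ ?_
    · intro z hza hzb n hn hzper
      have h1 : f^[n] (flip01 z) = flip01 z := by
        have := congrArg flip01 hzper
        rw [hgiter, flip01_flip01] at this
        exact this
      have h2 : a ≤ flip01 z := by
        have := flip01_le_flip01.mpr hzb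
        rwa [flip01_flip01] at this
      have h3 : flip01 z ≤ b := by
        have := flip01_le_flip01.mpr hza
        rwa [flip01_flip01] at this
      exact hno (flip01 z) h2 h3 n hn h1
    · intro m n hmn hma hmb hna hnb
      rw [hgx] at hma hmb ⊢
      rw [hgx] at hna hnb ⊢
      have h2 : a ≤ f^[m] x := flip01_le_flip01.mp hmb
      have h3 : f^[m] x ≤ b := flip01_le_flip01.mp hma
      have h4 : a ≤ f^[n] x := flip01_le_flip01.mp hnb
      have h5 : f^[n] x ≤ b := flip01_le_flip01.mp hna
      exact flip01_lt_flip01.mpr (hInc m n hmn h2 h3 h4 h5)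
  · -- both fail : we get an ascent pair and a descent pair (or a periodic point)
    push_neg at hDec hInc
    obtain ⟨m, n, hmn, hma, hmb, hna, hnb, hge⟩ := hDec
    obtain ⟨m', n', hmn', hma', hmb', hna', hnb', hle'⟩ := hInc
    have hiter1 : f^[n - m] (f^[m] x) = f^[n] x := by
      rw [← Function.iterate_add_apply]
      congr 1
      omega
    have hiter2 : f^[n' - m'] (f^[m'] x) = f^[n'] x := by
      rw [← Function.iterate_add_apply]
      congr 1
      omega
    rcases eq_or_lt_of_le hge with heq | hlt
    · exact hno (f^[m] x) hma hmb (n - m) (by omega) (by rw [hiter1, ← heq])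
    rcases eq_or_lt_of_le hle' with heq' | hlt'
    · exact hno (f^[m'] x) hma' hmb' (n' - m') (by omega) (by rw [hiter2, heq'])
    refine clash f hf a b hno (f^[m] x) (f^[m'] x) (n - m) (n' - m') (by omega) (by omega)
      hma hmb ?_ ?_ ?_ hma' hmb' ?_ ?_ ?_
    · rw [hiter1]; exact hna
    · rw [hiter1]; exact hnb
    · rw [hiter1]; exact hlt
    · rw [hiter2]; exact hna'
    · rw [hiter2]; exact hnb'
    · rw [hiter2]; exact hlt'

theorem stmt_1 (f : UI → UI) (hf : Continuous f)
    (h0 : Dynamics.coverEntropy f Set.univ = 0)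
    (x : UI) (hinf : (omegaSet f x).Infinite)
    (a b : UI) (p₁ p₂ p₃ : UI)
    (hp₁ : p₁ ∈ Set.Icc a b ∩ omegaSet f x)
    (hp₂ : p₂ ∈ Set.Icc a b ∩ omegaSet f x)
    (hp₃ : p₃ ∈ Set.Icc a b ∩ omegaSet f x)
    (h12 : p₁ ≠ p₂) (h13 : p₁ ≠ p₃) (h23 : p₂ ≠ p₃) :
    ∃ p ∈ Set.Icc a b, IsPerPt f p := by
  by_contra hcon
  push_neg at hcon
  have hno : ∀ z : UI, a ≤ z → z ≤ b → ∀ n, 1 ≤ n → f^[n] z ≠ z := by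
    intro z hza hzb n hn hper
    exact (hcon z ⟨hza, hzb⟩) ⟨n, hn, hper⟩
  obtain ⟨hm₁, hw₁⟩ := hp₁
  obtain ⟨hm₂, hw₂⟩ := hp₂
  obtain ⟨hm₃, hw₃⟩ := hp₃
  rcases lt_or_gt_of_ne h12 with h₁₂ | h₂₁ <;>
    rcases lt_or_gt_of_ne h13 with h₁₃ | h₃₁ <;>
      rcases lt_or_gt_of_ne h23 with h₂₃ | h₃₂
  · exact core f hf x a b p₁ p₂ p₃ hm₁ hw₁ hm₂ hw₂ hm₃ hw₃ h₁₂ h₂₃ hno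
  · exact core f hf x a b p₁ p₃ p₂ hm₁ hw₁ hm₃ hw₃ hm₂ hw₂ h₁₃ h₃₂ hno
  · exact absurd (h₃₁.trans (h₁₂.trans h₂₃)) (lt_irrefl p₃)
  · exact core f hf x a b p₃ p₁ p₂ hm₃ hw₃ hm₁ hw₁ hm₂ hw₂ h₃₁ h₁₂ hno
  · exact core f hf x a b p₂ p₁ p₃ hm₂ hw₂ hm₁ hw₁ hm₃ hw₃ h₂₁ h₁₃ hno
  · exact absurd (h₂₁.trans (h₁₃.trans h₃₂)) (lt_irrefl p₂)
  · exact core f hf x a b p₂ p₃ p₁ hm₂ hw₂ hm₃ hw₃ hm₁ hw₁ h₂₃ h₃₁ hno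
  · exact core f hf x a b p₃ p₂ p₁ hm₃ hw₃ hm₂ hw₂ hm₁ hw₁ h₃₂ h₂₁ hno
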